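/- Let β be a Pisot number and let δ be the smallest positive integer such that ⌊β⌋/β^{δ−1} + ⌊β⌋/β^{δ} ≤ 1 − {β}. For an input sequence (x_j)_{j≥1} over A_β = {0, …, ⌈β⌉−1} with 0 ≤ Σ_{j≥1} x_j β^{−j} < 1/(β+1), define q_0 = 0, q_j = q_{j−1} + x_j β^{−j} for 1 ≤ j ≤ δ, and for j ≥ 1: z_{δ+j} = −β q_{δ+j−1} + (−1)^j x_{δ+j} β^{−δ}; y_j = ⌊z_{δ+j} + β/(β+1)⌋ if −β/(β+1) ≤ z_{δ+j} ≤ β²/(β+1), y_j = ⌊β⌋ if z_{δ+j} > β²/(β+1), y_j = 0 if z_{δ+j} < −β/(β+1); and q_{δ+j} = z_{δ+j} − y_j. Then the set of all values q_n, taken over all n ≥ 0 and over all such input sequences, is finite. -/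

import Mathlib

/-- A Pisot number: an algebraic integer `β > 1` all of whose other complex conjugates
have modulus strictly less than `1`. -/
def IsPisot (β : ℝ) : Prop :=
  1 < β ∧ IsIntegral ℤ β ∧
    ∀ z : ℂ, Polynomial.aeval z (minpoly ℤ β) = 0 → z ≠ (β : ℂ) → ‖z‖ < 1

/-- The condition `⌊β⌋/β^(δ-1) + ⌊β⌋/β^δ ≤ 1 - {β}` defining the delay of the on-line
conversion algorithm. -/
noncomputable def DelayCond (β : ℝ) (δ : ℕ) : Prop :=
  (⌊β⌋ : ℝ) / β ^ (δ - 1) + (⌊β⌋ : ℝ) / β ^ δ ≤ 1 - Int.fract β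

/-- The states (remainders) `q_n` of the on-line conversion algorithm with delay `δ` on
the input `(x_j)_{j≥1}` (where `x j` is the digit `x_{j+1}`): `q_0 = 0`;
`q_j = q_{j-1} + x_j β^{-j}` for `1 ≤ j ≤ δ`; and for `n = δ + j` with `j ≥ 1`,
`z_{δ+j} = -β q_{δ+j-1} + (-1)^j x_{δ+j} β^{-δ}`, the output digit `y_j` is
`⌊z_{δ+j} + β/(β+1)⌋` if `-β/(β+1) ≤ z_{δ+j} ≤ β²/(β+1)`, `⌊β⌋` if
`z_{δ+j} > β²/(β+1)`, `0` if `z_{δ+j} < -β/(β+1)`, and `q_{δ+j} = z_{δ+j} - y_j`. -/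
noncomputable def qseq (β : ℝ) (δ : ℕ) (x : ℕ → ℤ) : ℕ → ℝ
  | 0 => 0
  | n + 1 =>
    if n + 1 ≤ δ then qseq β δ x n + (x n : ℝ) * (β ^ (n + 1))⁻¹
    else
      let j := n + 1 - δ
      let z := -β * qseq β δ x n + (-1 : ℝ) ^ j * (x n : ℝ) * (β ^ δ)⁻¹
      let y : ℤ :=
        if z < -β / (β + 1) then 0
        else if z ≤ β ^ 2 / (β + 1) then ⌊z + β / (β + 1)⌋
        else ⌊β⌋
      z - (y : ℝ)

noncomputable def ydig (β z : ℝ) : ℤ :=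
  if z < -β / (β + 1) then 0
  else if z ≤ β ^ 2 / (β + 1) then ⌊z + β / (β + 1)⌋
  else ⌊β⌋

theorem qseq_succ_le (β : ℝ) (δ : ℕ) (x : ℕ → ℤ) (n : ℕ) (h : n + 1 ≤ δ) :
    qseq β δ x (n+1) = qseq β δ x n + (x n : ℝ) * (β ^ (n + 1))⁻¹ := by
  rw [qseq]; simp [h]

theorem qseq_succ_gt (β : ℝ) (δ : ℕ) (x : ℕ → ℤ) (n : ℕ) (h : ¬ (n + 1 ≤ δ)) :
    qseq β δ x (n+1) =
      (-β * qseq β δ x n + (-1 : ℝ) ^ (n + 1 - δ) * (x n : ℝ) * (β ^ δ)⁻¹) -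
      (ydig β (-β * qseq β δ x n + (-1 : ℝ) ^ (n + 1 - δ) * (x n : ℝ) * (β ^ δ)⁻¹) : ℝ) := by
  rw [qseq]; simp [h, ydig]

section Tail
variable (β : ℝ) (x : ℕ → ℤ)

noncomputable def tailS (m : ℕ) : ℝ := ∑' j : ℕ, (x (m + j) : ℝ) * (β⁻¹) ^ (m + j + 1)

variable {β x}
variable (hβ : 1 < β) (hx : ∀ j, 0 ≤ x j ∧ x j ≤ ⌈β⌉ - 1)

noncomputable def Aβ (β : ℝ) : ℝ := (⌈β⌉ : ℝ) - 1

include hβ hx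

theorem xA (j : ℕ) : 0 ≤ (x j : ℝ) ∧ (x j : ℝ) ≤ Aβ β := by
  obtain ⟨h1, h2⟩ := hx j
  constructor
  · exact_mod_cast h1
  · have : (x j : ℝ) ≤ ((⌈β⌉ - 1 : ℤ) : ℝ) := by exact_mod_cast h2
    simpa [Aβ] using this

theorem summable_f : Summable (fun j : ℕ => (x j : ℝ) * (β⁻¹) ^ (j + 1)) := by
  have hβ0 : (0:ℝ) < β := lt_trans zero_lt_one hβ
  have hinv : β⁻¹ < 1 := inv_lt_one_of_one_lt₀ hβ
  have hinv0 : (0:ℝ) ≤ β⁻¹ := inv_nonneg.2 hβ0.le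
  have hg : Summable (fun j : ℕ => Aβ β * (β⁻¹) ^ (j + 1)) := by
    refine Summable.mul_left _ ?_
    exact (summable_geometric_of_lt_one hinv0 hinv).comp_injective (add_left_injective 1)
  refine Summable.of_nonneg_of_le (fun j => ?_) (fun j => ?_) hg
  · exact mul_nonneg (xA hβ hx j).1 (pow_nonneg hinv0 _)
  · exact mul_le_mul_of_nonneg_right (xA hβ hx j).2 (pow_nonneg hinv0 _)

theorem summable_shift (m : ℕ) :
    Summable (fun j : ℕ => (x (m + j) : ℝ) * (β⁻¹) ^ (m + j + 1)) := by
  have := (summable_nat_add_iff (f := fun j : ℕ => (x j : ℝ) * (β⁻¹) ^ (j + 1)) m).2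
    (summable_f hβ hx)
  exact this.congr (fun j => by rw [add_comm j m])

theorem tailS_split (m : ℕ) :
    tailS β x m = (x m : ℝ) * (β⁻¹) ^ (m + 1) + tailS β x (m + 1) := by
  have h := Summable.tsum_eq_zero_add (summable_shift hβ hx m)
  simp only [tailS]
  rw [h, show m + 0 = m by ring]
  congr 1
  exact tsum_congr fun j => by rw [show m + (j+1) = m + 1 + j by ring]

theorem tailS_nonneg (m : ℕ) : 0 ≤ tailS β x m := by
  have hβ0 : (0:ℝ) < β := lt_trans zero_lt_one hβ
  refine tsum_nonneg fun j => mul_nonneg (xA hβ hx _).1 (pow_nonneg (inv_nonneg.2 hβ0.le) _)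

theorem tailS_le (m : ℕ) : tailS β x m ≤ Aβ β * (β⁻¹) ^ (m + 1) * (1 - β⁻¹)⁻¹ := by
  have hβ0 : (0:ℝ) < β := lt_trans zero_lt_one hβ
  have hinv : β⁻¹ < 1 := inv_lt_one_of_one_lt₀ hβ
  have hinv0 : (0:ℝ) ≤ β⁻¹ := inv_nonneg.2 hβ0.le
  have hg : Summable (fun j : ℕ => Aβ β * (β⁻¹) ^ (m + 1) * (β⁻¹) ^ j) :=
    Summable.mul_left _ (summable_geometric_of_lt_one hinv0 hinv)
  have h1 : tailS β x m ≤ ∑' j : ℕ, Aβ β * (β⁻¹) ^ (m + 1) * (β⁻¹) ^ j := by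
    refine Summable.tsum_le_tsum (fun j => ?_) (summable_shift hβ hx m) hg
    have : (x (m+j) : ℝ) * (β⁻¹) ^ (m + j + 1) ≤ Aβ β * (β⁻¹) ^ (m + j + 1) :=
      mul_le_mul_of_nonneg_right (xA hβ hx _).2 (pow_nonneg hinv0 _)
    calc (x (m+j) : ℝ) * (β⁻¹) ^ (m + j + 1) ≤ Aβ β * (β⁻¹) ^ (m + j + 1) := this
      _ = Aβ β * (β⁻¹) ^ (m + 1) * (β⁻¹) ^ j := by ring
  rw [tsum_mul_left, tsum_geometric_of_lt_one hinv0 hinv] at h1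
  exact h1

theorem tailS_zero_eq (m : ℕ) :
    tailS β x 0 = (∑ j ∈ Finset.range m, (x j : ℝ) * (β⁻¹) ^ (j + 1)) + tailS β x m := by
  induction m with
  | zero => simp
  | succ k ih =>
    rw [ih, tailS_split hβ hx k, Finset.sum_range_succ]
    ring

end Tail

noncomputable def μβ (β : ℝ) : ℝ := (1 - Int.fract β) / (β ^ 2 - 1)
noncomputable def τβ (β : ℝ) (δ : ℕ) : ℝ := Aβ β * (β⁻¹) ^ (δ + 1) * (1 - β⁻¹)⁻¹

section Facts
variable {β : ℝ} {δ : ℕ}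

theorem A_ge_one (hβ : 1 < β) : 1 ≤ Aβ β := by
  have h1 : (1:ℤ) < ⌈β⌉ := Int.lt_ceil.mpr (by exact_mod_cast hβ)
  have : (2:ℤ) ≤ ⌈β⌉ := h1
  have : (2:ℝ) ≤ (⌈β⌉:ℝ) := by exact_mod_cast this
  simp only [Aβ]; linarith

theorem A_le_floor (hβ : 1 < β) : Aβ β ≤ (⌊β⌋ : ℝ) := by
  have : ⌈β⌉ ≤ ⌊β⌋ + 1 := Int.ceil_le_floor_add_one β
  have : ((⌈β⌉:ℤ):ℝ) ≤ ((⌊β⌋ + 1 : ℤ):ℝ) := by exact_mod_cast this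
  simp only [Aβ]; push_cast at this ⊢; linarith

theorem mu_pos (hβ : 1 < β) : 0 < μβ β := by
  have h1 : Int.fract β < 1 := Int.fract_lt_one β
  have h2 : (0:ℝ) < β ^ 2 - 1 := by nlinarith
  exact div_pos (by linarith) h2

theorem mu_id (hβ : 1 < β) : μβ β * (β ^ 2 - 1) = 1 - Int.fract β := by
  have h2 : (β:ℝ) ^ 2 - 1 ≠ 0 := by nlinarith
  rw [μβ, div_mul_cancel₀ _ h2]

theorem tau_pos (hβ : 1 < β) : 0 < τβ β δ := by
  have hb0 : (0:ℝ) < β := lt_trans zero_lt_one hβ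
  have h1 : (0:ℝ) < 1 - β⁻¹ := by
    have : β⁻¹ < 1 := inv_lt_one_of_one_lt₀ hβ
    linarith
  have hA := A_ge_one hβ
  have : (0:ℝ) < (β⁻¹) ^ (δ + 1) := pow_pos (inv_pos.2 hb0) _
  exact mul_pos (mul_pos (by linarith) this) (inv_pos.2 h1)

theorem tau_eq (hβ : 1 < β) : τβ β δ = Aβ β / (β ^ δ * (β - 1)) := by
  have hb0 : (0:ℝ) < β := lt_trans zero_lt_one hβ
  have hb : β ≠ 0 := ne_of_gt hb0
  have h1 : (1:ℝ) - β⁻¹ = (β - 1) / β := by field_simp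
  rw [τβ, h1, inv_pow]
  rw [inv_div]
  have hβ1 : β - 1 ≠ 0 := by linarith
  field_simp
  ring

theorem tau_le_mu (hβ : 1 < β) (hδpos : 0 < δ) (hd : DelayCond β δ) : τβ β δ ≤ μβ β := by
  have hb0 : (0:ℝ) < β := lt_trans zero_lt_one hβ
  have hbd : (0:ℝ) < β ^ δ := pow_pos hb0 _
  have hpow : β ^ (δ - 1) * β = β ^ δ := by
    rw [← pow_succ]; congr 1; omega
  have hL : (⌊β⌋ : ℝ) * (β + 1) / β ^ δ ≤ 1 - Int.fract β := by
    have hd' := hd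
    unfold DelayCond at hd'
    have h1 : (⌊β⌋ : ℝ) / β ^ (δ - 1) = (⌊β⌋ : ℝ) * β / β ^ δ := by
      rw [← hpow, mul_div_mul_right _ _ (ne_of_gt hb0)]
    calc (⌊β⌋ : ℝ) * (β + 1) / β ^ δ
        = (⌊β⌋ : ℝ) * β / β ^ δ + (⌊β⌋ : ℝ) / β ^ δ := by ring
      _ = (⌊β⌋ : ℝ) / β ^ (δ - 1) + (⌊β⌋ : ℝ) / β ^ δ := by rw [h1]
      _ ≤ 1 - Int.fract β := hd'
  have hA : Aβ β ≤ (⌊β⌋ : ℝ) := A_le_floor hβ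
  have hkey : Aβ β * (β + 1) / β ^ δ ≤ 1 - Int.fract β := by
    refine le_trans ?_ hL
    gcongr
  have h2 : (0:ℝ) < β ^ 2 - 1 := by nlinarith
  rw [tau_eq hβ, μβ]
  rw [div_le_div_iff₀ (by nlinarith) h2]
  have hexp : Aβ β * (β + 1) ≤ (1 - Int.fract β) * β ^ δ := by
    rw [div_le_iff₀ hbd] at hkey; linarith
  nlinarith [hbd, hexp, sub_pos.2 hβ]

end Facts

theorem qseq_partial (β : ℝ) (δ : ℕ) (x : ℕ → ℤ) : ∀ m, m ≤ δ →
    qseq β δ x m = ∑ j ∈ Finset.range m, (x j : ℝ) * (β⁻¹) ^ (j + 1)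
  | 0, _ => by simp [qseq]
  | (k+1), h => by
    rw [qseq_succ_le β δ x k h, qseq_partial β δ x k (le_trans (Nat.le_succ k) h),
      Finset.sum_range_succ, ← inv_pow]

set_option maxHeartbeats 1600000 in
theorem invariantE {β : ℝ} {δ : ℕ} {x : ℕ → ℤ} (hβ : 1 < β)
    (hx : ∀ j, 0 ≤ x j ∧ x j ≤ ⌈β⌉ - 1) (hδpos : 0 < δ) (hd : DelayCond β δ)
    (hv1 : tailS β x 0 < 1 / (β + 1)) : ∀ k,
    -(β / (β + 1)) - β * μβ β ≤ qseq β δ x (δ + k) + (-β) ^ k * tailS β x (δ + k) ∧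
    qseq β δ x (δ + k) + (-β) ^ k * tailS β x (δ + k) ≤ 1 / (β + 1) + μβ β := by
  have hb0 : (0:ℝ) < β := lt_trans zero_lt_one hβ
  have hb1 : (0:ℝ) < β + 1 := by linarith
  have hμ : 0 < μβ β := mu_pos hβ
  have hτμ : τβ β δ ≤ μβ β := tau_le_mu hβ hδpos hd
  have hτβμ : τβ β δ ≤ β * μβ β := le_trans hτμ (by nlinarith)
  have hβne : β ≠ 0 := ne_of_gt hb0
  intro k
  induction k with
  | zero =>
    have h0 : qseq β δ x δ = ∑ j ∈ Finset.range δ, (x j : ℝ) * (β⁻¹) ^ (j + 1) :=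
      qseq_partial β δ x δ le_rfl
    have h1 : qseq β δ x (δ + 0) + (-β) ^ 0 * tailS β x (δ + 0) = tailS β x 0 := by
      rw [tailS_zero_eq hβ hx δ]
      simp [h0]
    rw [h1]
    have hv0 : 0 ≤ tailS β x 0 := tailS_nonneg hβ hx 0
    have hP : 0 ≤ β / (β + 1) := by positivity
    constructor
    · nlinarith
    · linarith
  | succ k ih =>
    obtain ⟨ihL, ihU⟩ := ih
    set T := tailS β x (δ + k) with hT
    set T' := tailS β x (δ + k + 1) with hT'
    set q := qseq β δ x (δ + k) with hq
    set E := q + (-β) ^ k * T with hE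
    set c : ℝ := (-β) ^ (k+1) * T' with hc
    set z : ℝ := -β * q + (-1:ℝ) ^ (k+1) * (x (δ+k) : ℝ) * (β ^ δ)⁻¹ with hzdef
    have hsplit : T = (x (δ+k) : ℝ) * (β⁻¹) ^ (δ + k + 1) + T' := tailS_split hβ hx (δ+k)
    have hpow : (-β) ^ (k+1) * (β⁻¹) ^ (δ + k + 1) = (-1:ℝ) ^ (k+1) * (β ^ δ)⁻¹ := by
      rw [neg_pow, inv_pow, show δ + k + 1 = δ + (k+1) by ring, pow_add]
      field_simp
      ring
    have hz : z = -β * E - c := by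
      rw [hzdef, hE, hc, hsplit]
      linear_combination (-(x (δ+k) : ℝ)) * hpow
    have hstep : qseq β δ x (δ + k + 1) = z - (ydig β z : ℝ) := by
      have hnot : ¬ (δ + k + 1 ≤ δ) := by omega
      have h := qseq_succ_gt β δ x (δ + k) hnot
      rw [show δ + k + 1 - δ = k + 1 by omega] at h
      rw [h, hzdef, ← hq]
    have hE' : qseq β δ x (δ + (k+1)) + (-β) ^ (k+1) * tailS β x (δ + (k+1)) =
        z + c - (ydig β z : ℝ) := by
      rw [show δ + (k+1) = δ + k + 1 by ring, hstep, ← hT', ← hc]; ring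
    rw [hE']
    have hcτ : |c| ≤ τβ β δ := by
      have hTnn : 0 ≤ T' := tailS_nonneg hβ hx _
      have hTle : T' ≤ Aβ β * (β⁻¹) ^ (δ + k + 1 + 1) * (1 - β⁻¹)⁻¹ := tailS_le hβ hx _
      rw [hc, abs_mul, abs_pow, abs_neg, abs_of_pos hb0, abs_of_nonneg hTnn]
      calc β ^ (k+1) * T' ≤ β ^ (k+1) * (Aβ β * (β⁻¹) ^ (δ + k + 1 + 1) * (1 - β⁻¹)⁻¹) := by
            apply mul_le_mul_of_nonneg_left hTle (by positivity)
        _ = τβ β δ := by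
            rw [τβ]
            have h9 : β ^ (k+1) * (β⁻¹) ^ (δ + k + 1 + 1) = (β⁻¹) ^ (δ + 1) := by
              rw [inv_pow, inv_pow, show δ + k + 1 + 1 = (δ+1) + (k+1) by ring, pow_add]
              field_simp
              ring
            calc β ^ (k+1) * (Aβ β * (β⁻¹) ^ (δ + k + 1 + 1) * (1 - β⁻¹)⁻¹)
                = Aβ β * (β ^ (k+1) * (β⁻¹) ^ (δ + k + 1 + 1)) * (1 - β⁻¹)⁻¹ := by ring
              _ = Aβ β * (β⁻¹) ^ (δ + 1) * (1 - β⁻¹)⁻¹ := by rw [h9]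
    obtain ⟨hcL, hcU⟩ := abs_le.mp hcτ
    have hEz : -β * E = z + c := by rw [hz]; ring
    have hμid : μβ β * β ^ 2 - μβ β = 1 - Int.fract β := by
      have := mu_id hβ; nlinarith [this]
    have hfr : Int.fract β = β - (⌊β⌋:ℝ) := by
      unfold Int.fract; ring
    have hfl_le : (⌊β⌋:ℝ) ≤ β := Int.floor_le β
    have hid1 : -β * (1/(β+1) + μβ β) = -(β/(β+1)) - β * μβ β := by
      field_simp
      ring
    have hid2 : -(β/(β+1)) + 1 = 1/(β+1) := by field_simp; ring
    have hid3 : β ^ 2/(β+1) - β = -(β/(β+1)) := by field_simp; ring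
    have hid4 : β ^ 2/(β+1) - 1/(β+1) = β - 1 := by
      field_simp
      ring
    have hmulU : β * E ≤ β * (1/(β+1) + μβ β) := mul_le_mul_of_nonneg_left ihU hb0.le
    have hmulL : β * (-(β/(β+1)) - β * μβ β) ≤ β * E := mul_le_mul_of_nonneg_left ihL hb0.le
    clear_value z c E q T' T
    rw [ydig]
    split_ifs with h1 h2
    · -- low case : y = 0
      push_cast
      constructor
      · have hzc : -(β/(β+1)) - β * μβ β ≤ -β * E := by linarith [hmulU, hid1]
        linarith [hEz, hzc]
      · have hP : 0 ≤ β/(β+1) := by positivity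
        have hQ : 0 ≤ 1/(β+1) := by positivity
        have hnd : -β/(β+1) = -(β/(β+1)) := neg_div _ _
        linarith [h1, hcU, hτμ, hP, hQ, hnd]
    · -- middle case
      have hf1 : (⌊z + β/(β+1)⌋:ℝ) ≤ z + β/(β+1) := Int.floor_le _
      have hf2 : z + β/(β+1) < (⌊z + β/(β+1)⌋:ℝ) + 1 := Int.lt_floor_add_one _
      constructor
      · linarith
      · linarith
    · -- high case
      push_neg at h1 h2
      have hax : β * (β/(β+1)) = β ^ 2/(β+1) := by rw [mul_div_assoc', sq]
      have h7 : -β * (-(β/(β+1)) - β * μβ β) = β ^ 2/(β+1) + μβ β * β ^ 2 := by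
        linear_combination hax
      constructor
      · linarith [h2, hcL, hfl_le, hid3, hτβμ]
      · linarith [hmulL, hEz, h7, hid4, hμid, hfr]

noncomputable def B0 (β : ℝ) (δ : ℕ) : ℝ := δ * Aβ β + 1 + β * μβ β + τβ β δ

theorem corr_bound {β : ℝ} {δ : ℕ} {x : ℕ → ℤ} (hβ : 1 < β)
    (hx : ∀ j, 0 ≤ x j ∧ x j ≤ ⌈β⌉ - 1) (k : ℕ) :
    |(-β) ^ k * tailS β x (δ + k)| ≤ τβ β δ := by
  have hb0 : (0:ℝ) < β := lt_trans zero_lt_one hβ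
  have hTnn : 0 ≤ tailS β x (δ + k) := tailS_nonneg hβ hx _
  have hTle : tailS β x (δ + k) ≤ Aβ β * (β⁻¹) ^ (δ + k + 1) * (1 - β⁻¹)⁻¹ := tailS_le hβ hx _
  rw [abs_mul, abs_pow, abs_neg, abs_of_pos hb0, abs_of_nonneg hTnn]
  calc β ^ k * tailS β x (δ + k)
      ≤ β ^ k * (Aβ β * (β⁻¹) ^ (δ + k + 1) * (1 - β⁻¹)⁻¹) :=
        mul_le_mul_of_nonneg_left hTle (by positivity)
    _ = τβ β δ := by
        rw [τβ]
        have h9 : β ^ k * (β⁻¹) ^ (δ + k + 1) = (β⁻¹) ^ (δ + 1) := by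
          rw [inv_pow, inv_pow, show δ + k + 1 = (δ+1) + k by ring, pow_add]
          field_simp
        calc β ^ k * (Aβ β * (β⁻¹) ^ (δ + k + 1) * (1 - β⁻¹)⁻¹)
            = Aβ β * (β ^ k * (β⁻¹) ^ (δ + k + 1)) * (1 - β⁻¹)⁻¹ := by ring
          _ = Aβ β * (β⁻¹) ^ (δ + 1) * (1 - β⁻¹)⁻¹ := by rw [h9]

theorem B0_pos {β : ℝ} {δ : ℕ} (hβ : 1 < β) : 0 < B0 β δ := by
  have h1 := A_ge_one hβ
  have h2 := mu_pos hβ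
  have h3 : (0:ℝ) < τβ β δ := tau_pos hβ
  have hb0 : (0:ℝ) < β := lt_trans zero_lt_one hβ
  have : (0:ℝ) ≤ (δ:ℝ) * Aβ β := by positivity
  simp only [B0]
  nlinarith

theorem qbound {β : ℝ} {δ : ℕ} {x : ℕ → ℤ} (hβ : 1 < β)
    (hx : ∀ j, 0 ≤ x j ∧ x j ≤ ⌈β⌉ - 1) (hδpos : 0 < δ) (hd : DelayCond β δ)
    (hv1 : tailS β x 0 < 1 / (β + 1)) (n : ℕ) : |qseq β δ x n| ≤ B0 β δ := by
  have hb0 : (0:ℝ) < β := lt_trans zero_lt_one hβ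
  have hb1 : (0:ℝ) < β + 1 := by linarith
  have hμ : 0 < μβ β := mu_pos hβ
  have hτ : 0 < τβ β δ := tau_pos hβ
  have hA1 : 1 ≤ Aβ β := A_ge_one hβ
  rcases le_or_gt n δ with h | h
  · -- partial-sum phase
    rw [qseq_partial β δ x n h]
    have hterm : ∀ j ∈ Finset.range n, (0:ℝ) ≤ (x j : ℝ) * (β⁻¹) ^ (j + 1) := fun j _ =>
      mul_nonneg (xA hβ hx j).1 (by positivity)
    have hterm2 : ∀ j ∈ Finset.range n, (x j : ℝ) * (β⁻¹) ^ (j + 1) ≤ Aβ β := by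
      intro j _
      have h1 : (x j : ℝ) * (β⁻¹) ^ (j + 1) ≤ Aβ β * (β⁻¹) ^ (j + 1) :=
        mul_le_mul_of_nonneg_right (xA hβ hx j).2 (by positivity)
      have h2 : (β⁻¹ : ℝ) ^ (j + 1) ≤ 1 :=
        pow_le_one₀ (by positivity) (inv_le_one_of_one_le₀ hβ.le)
      nlinarith
    rw [abs_of_nonneg (Finset.sum_nonneg hterm)]
    calc ∑ j ∈ Finset.range n, (x j : ℝ) * (β⁻¹) ^ (j + 1)
        ≤ ∑ _j ∈ Finset.range n, Aβ β := Finset.sum_le_sum hterm2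
      _ = n * Aβ β := by rw [Finset.sum_const, Finset.card_range]; ring
      _ ≤ δ * Aβ β := by
          have : (n:ℝ) ≤ (δ:ℝ) := by exact_mod_cast h
          nlinarith
      _ ≤ B0 β δ := by simp only [B0]; nlinarith
  · obtain ⟨k, rfl⟩ : ∃ k, n = δ + k := ⟨n - δ, by omega⟩
    obtain ⟨hL, hU⟩ := invariantE hβ hx hδpos hd hv1 k
    have hcorr := corr_bound (δ := δ) hβ hx k
    obtain ⟨hc1, hc2⟩ := abs_le.mp hcorr
    have hP : β/(β+1) ≤ 1 := by
      rw [div_le_one hb1]; linarith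
    have hQ : 1/(β+1) ≤ 1 := by
      rw [div_le_one hb1]; linarith
    have hPn : 0 ≤ β/(β+1) := by positivity
    have hQn : 0 ≤ 1/(β+1) := by positivity
    have hδA : (0:ℝ) ≤ (δ:ℝ) * Aβ β := by positivity
    rw [abs_le]
    constructor
    · simp only [B0]; nlinarith
    · simp only [B0]; nlinarith

theorem ydig_abs_le {β : ℝ} (hβ : 1 < β) {z M : ℝ} (hz : |z| ≤ M) :
    |(ydig β z : ℝ)| ≤ M + 2 + β := by
  have hb0 : (0:ℝ) < β := lt_trans zero_lt_one hβ
  have hb1 : (0:ℝ) < β + 1 := by linarith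
  have hM : 0 ≤ M := le_trans (abs_nonneg z) hz
  obtain ⟨hz1, hz2⟩ := abs_le.mp hz
  have hP : 0 ≤ β/(β+1) := by positivity
  have hP1 : β/(β+1) ≤ 1 := by rw [div_le_one hb1]; linarith
  rw [ydig]
  split_ifs with h1 h2
  · simp; linarith
  · have hf1 : (⌊z + β/(β+1)⌋:ℝ) ≤ z + β/(β+1) := Int.floor_le _
    have hf2 : z + β/(β+1) < (⌊z + β/(β+1)⌋:ℝ) + 1 := Int.lt_floor_add_one _
    rw [abs_le]
    constructor <;> linarith
  · have hfl0 : (0:ℝ) ≤ (⌊β⌋:ℝ) := by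
      have : (0:ℤ) ≤ ⌊β⌋ := Int.floor_nonneg.2 (by linarith)
      exact_mod_cast this
    rw [abs_of_nonneg hfl0]
    have := Int.floor_le β
    linarith

open IntermediateField in
set_option maxHeartbeats 2000000 in
theorem exists_rep (β : ℝ) (hβ1 : 1 < β) (hint : IsIntegral ℤ β)
    (δ : ℕ) (x : ℕ → ℤ) (hx : ∀ j, 0 ≤ x j ∧ x j ≤ ⌈β⌉ - 1)
    (M : ℝ) (hqb : ∀ n, |qseq β δ x n| ≤ M) :
    let K := ℚ⟮β⟯
    let b : K := IntermediateField.AdjoinSimple.gen ℚ β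
    let Ym : ℝ := β * M + Aβ β + 2 + β
    ∀ n : ℕ, ∃ p : K, IsIntegral ℤ p ∧
      (∀ φ : K →+* ℂ, φ b = (β:ℂ) → φ p = ((algebraMap K ℝ p : ℝ) : ℂ)) ∧
      algebraMap K ℝ p = β ^ δ * qseq β δ x n ∧
      (∀ φ : K →+* ℂ, ‖φ b‖ < 1 →
        ‖φ p‖ ≤ (if n ≤ δ then (n:ℝ) * Aβ β
          else (δ:ℝ) * Aβ β + (Aβ β + Ym) / (1 - ‖φ b‖))) := by
  intro K b Ym
  have hb0 : (0:ℝ) < β := lt_trans zero_lt_one hβ1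
  have hβδ : (0:ℝ) < β ^ δ := pow_pos hb0 δ
  have hβδ1 : (1:ℝ) ≤ β ^ δ := one_le_pow₀ hβ1.le
  have hA1 : 1 ≤ Aβ β := A_ge_one hβ1
  have hM0 : 0 ≤ M := le_trans (abs_nonneg _) (hqb 0)
  have hYm : 0 < Ym := by simp only [Ym]; nlinarith
  have hbR : algebraMap K ℝ b = β := IntermediateField.AdjoinSimple.algebraMap_gen ℚ β
  have hbint : IsIntegral ℤ b := by
    rw [← isIntegral_algebraMap_iff (algebraMap K ℝ).injective, hbR]
    exact hint
  have hZK : ∀ m : ℤ, IsIntegral ℤ ((m : K)) := by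
    intro m
    have h1 : algebraMap ℤ K m = (m : K) := by
      rw [algebraMap_int_eq]; rfl
    rw [← h1]
    exact isIntegral_algebraMap
  have hxr : ∀ j, 0 ≤ (x j : ℝ) ∧ (x j : ℝ) ≤ Aβ β := by
    intro j
    obtain ⟨h1, h2⟩ := hx j
    constructor
    · exact_mod_cast h1
    · have : (x j : ℝ) ≤ ((⌈β⌉ - 1 : ℤ) : ℝ) := by exact_mod_cast h2
      simpa [Aβ] using this
  intro n
  induction n with
  | zero =>
    refine ⟨0, isIntegral_zero, by simp, by simp [qseq], ?_⟩
    intro φ _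
    simp
  | succ n ih =>
    obtain ⟨p, hpint, hpemb, hpval, hpbound⟩ := ih
    by_cases hle : n + 1 ≤ δ
    · refine ⟨p + (x n : K) * b ^ (δ - (n+1)), ?_, ?_, ?_, ?_⟩
      · exact hpint.add ((hZK _).mul (hbint.pow _))
      · intro φ hφ
        simp only [map_add, map_mul, map_pow, map_intCast, hφ, hbR]
        rw [hpemb φ hφ]
        push_cast
        ring
      · rw [map_add, map_mul, map_pow, map_intCast, hbR, hpval,
          qseq_succ_le β δ x n hle]
        have hpows : β ^ (δ - (n+1)) * β ^ (n+1) = β ^ δ := by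
          rw [← pow_add]; congr 1; omega
        have hkey : β ^ δ * (β ^ (n+1))⁻¹ = β ^ (δ - (n+1)) := by
          rw [← hpows]
          field_simp
        linear_combination (-(x n : ℝ)) * hkey
      · intro φ hφ
        have hnle : n ≤ δ := by omega
        have ht0 : 0 ≤ ‖φ b‖ := norm_nonneg _
        have hb1 : ‖φ b‖ ≤ 1 := le_of_lt hφ
        have hpow1 : ‖φ (b ^ (δ - (n+1)))‖ ≤ 1 := by
          rw [map_pow, norm_pow]
          exact pow_le_one₀ (norm_nonneg _) hb1
        have hxn : ‖φ ((x n : K))‖ ≤ Aβ β := by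
          rw [map_intCast]
          rw [Complex.norm_intCast]
          exact abs_le.mpr ⟨by linarith [(hxr n).1], (hxr n).2⟩
        have hih := hpbound φ hφ
        rw [if_pos hnle] at hih
        rw [if_pos hle]
        calc ‖φ (p + (x n : K) * b ^ (δ - (n+1)))‖
            ≤ ‖φ p‖ + ‖φ ((x n : K))‖ * ‖φ (b ^ (δ - (n+1)))‖ := by
              rw [map_add, map_mul]
              exact le_trans (norm_add_le _ _) (by rw [norm_mul])
          _ ≤ (n:ℝ) * Aβ β + Aβ β * 1 := by
              have h1 : ‖φ ((x n : K))‖ * ‖φ (b ^ (δ - (n+1)))‖ ≤ Aβ β * 1 := by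
                apply mul_le_mul hxn hpow1 (norm_nonneg _) (by linarith)
              linarith
          _ = ((n:ℝ) + 1) * Aβ β := by ring
          _ = ((n+1 : ℕ) : ℝ) * Aβ β := by push_cast; ring
    · -- output phase
      set zr : ℝ := -β * qseq β δ x n + (-1:ℝ) ^ (n + 1 - δ) * (x n : ℝ) * (β ^ δ)⁻¹ with hzr
      set y : ℤ := ydig β zr with hy
      have hstep : qseq β δ x (n+1) = zr - (y : ℝ) := qseq_succ_gt β δ x n hle
      have hzb : |zr| ≤ β * M + Aβ β := by
        have h1 : |(-β) * qseq β δ x n| ≤ β * M := by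
          rw [abs_mul, abs_neg, abs_of_pos hb0]
          exact mul_le_mul_of_nonneg_left (hqb n) hb0.le
        have h2 : |(-1:ℝ) ^ (n + 1 - δ) * (x n : ℝ) * (β ^ δ)⁻¹| ≤ Aβ β := by
          rw [abs_mul, abs_mul, abs_pow, abs_neg, abs_one, one_pow, one_mul,
            abs_of_nonneg (hxr n).1, abs_of_pos (inv_pos.2 hβδ)]
          calc (x n : ℝ) * (β ^ δ)⁻¹ ≤ Aβ β * 1 := by
                apply mul_le_mul (hxr n).2 (inv_le_one_of_one_le₀ hβδ1)
                  (by positivity) (by linarith)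
            _ = Aβ β := by ring
        calc |zr| ≤ |(-β) * qseq β δ x n| + |(-1:ℝ) ^ (n + 1 - δ) * (x n : ℝ) * (β ^ δ)⁻¹| := by
              rw [hzr]; exact abs_add_le _ _
          _ ≤ β * M + Aβ β := by linarith
      have hyb : |(y:ℝ)| ≤ Ym := by
        have := ydig_abs_le hβ1 hzb
        simpa [Ym, hy] using this
      refine ⟨-b * p + (-1:K) ^ (n + 1 - δ) * (x n : K) - (y : K) * b ^ δ, ?_, ?_, ?_, ?_⟩
      · refine (((hbint.neg).mul hpint).add ?_).sub ((hZK _).mul (hbint.pow _))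
        have hm1 : IsIntegral ℤ ((-1 : K)) := by
          have := hZK (-1)
          simpa using this
        exact (hm1.pow _).mul (hZK _)
      · intro φ hφ
        simp only [map_sub, map_add, map_mul, map_pow, map_neg, map_intCast, map_one, hφ, hbR]
        rw [hpemb φ hφ]
        push_cast
        ring
      · have hne : (β:ℝ) ^ δ ≠ 0 := ne_of_gt hβδ
        simp only [map_sub, map_add, map_mul, map_neg, map_pow, map_intCast, map_one,
          hbR, hpval, hstep]
        rw [hzr]
        field_simp
      · intro φ hφ
        set t : ℝ := ‖φ b‖ with htdef
        have ht0 : 0 ≤ t := norm_nonneg _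
        have ht1 : 1 - t > 0 := by linarith
        have hAY : 0 < Aβ β + Ym := by linarith
        have hδA : (0:ℝ) ≤ (δ:ℝ) * Aβ β := by positivity
        have hD : (0:ℝ) ≤ (Aβ β + Ym) / (1 - t) := by positivity
        -- IH bound ≤ D-level
        have hihD : ‖φ p‖ ≤ (δ:ℝ) * Aβ β + (Aβ β + Ym) / (1 - t) := by
          have hih := hpbound φ hφ
          by_cases hn : n ≤ δ
          · rw [if_pos hn] at hih
            have : (n:ℝ) * Aβ β ≤ (δ:ℝ) * Aβ β := by
              have : (n:ℝ) ≤ (δ:ℝ) := by exact_mod_cast hn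
              nlinarith
            linarith
          · rw [if_neg hn] at hih
            exact hih
        have hterm2 : ‖φ ((-1:K) ^ (n + 1 - δ) * (x n : K))‖ ≤ Aβ β := by
          rw [map_mul, norm_mul, map_pow, map_neg, map_one, norm_pow, norm_neg, norm_one,
            one_pow, one_mul, map_intCast, Complex.norm_intCast]
          exact abs_le.mpr ⟨by linarith [(hxr n).1], (hxr n).2⟩
        have hterm3 : ‖φ ((y : K) * b ^ δ)‖ ≤ Ym := by
          rw [map_mul, norm_mul, map_intCast, Complex.norm_intCast, map_pow, norm_pow]
          have h1 : ‖φ b‖ ^ δ ≤ 1 := pow_le_one₀ (norm_nonneg _) (le_of_lt hφ)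
          have h2 : |(y:ℝ)| ≤ Ym := hyb
          calc |(y:ℝ)| * ‖φ b‖ ^ δ ≤ Ym * 1 :=
                mul_le_mul h2 h1 (by positivity) (by linarith [abs_nonneg (y:ℝ)])
            _ = Ym := by ring
        have hterm1 : ‖φ (-b * p)‖ ≤ t * ‖φ p‖ := by
          rw [map_mul, norm_mul, map_neg, norm_neg]
        have htot : ‖φ (-b * p + (-1:K) ^ (n + 1 - δ) * (x n : K) - (y : K) * b ^ δ)‖ ≤
            t * ‖φ p‖ + Aβ β + Ym := by
          calc ‖φ (-b * p + (-1:K) ^ (n + 1 - δ) * (x n : K) - (y : K) * b ^ δ)‖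
              ≤ ‖φ (-b * p + (-1:K) ^ (n + 1 - δ) * (x n : K))‖ + ‖φ ((y : K) * b ^ δ)‖ := by
                rw [map_sub]; exact norm_sub_le _ _
            _ ≤ ‖φ (-b * p)‖ + ‖φ ((-1:K) ^ (n + 1 - δ) * (x n : K))‖ + ‖φ ((y : K) * b ^ δ)‖ := by
                have := norm_add_le (φ (-b * p)) (φ ((-1:K) ^ (n + 1 - δ) * (x n : K)))
                rw [map_add]
                linarith
            _ ≤ t * ‖φ p‖ + Aβ β + Ym := by linarith
        rw [if_neg hle]
        have hkey : (Aβ β + Ym) / (1 - t) * (1 - t) = Aβ β + Ym := by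
          field_simp
        have htd : t * ((δ:ℝ) * Aβ β) ≤ (δ:ℝ) * Aβ β := by nlinarith
        have hfin : t * ((δ:ℝ) * Aβ β + (Aβ β + Ym) / (1 - t)) + Aβ β + Ym ≤
            (δ:ℝ) * Aβ β + (Aβ β + Ym) / (1 - t) := by nlinarith
        calc ‖φ (-b * p + (-1:K) ^ (n + 1 - δ) * (x n : K) - (y : K) * b ^ δ)‖
            ≤ t * ‖φ p‖ + Aβ β + Ym := htot
          _ ≤ t * ((δ:ℝ) * Aβ β + (Aβ β + Ym) / (1 - t)) + Aβ β + Ym := by nlinarith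
          _ ≤ (δ:ℝ) * Aβ β + (Aβ β + Ym) / (1 - t) := hfin

open IntermediateField in
set_option maxHeartbeats 1000000 in
/-- If `β` is a Pisot number, the set of all states `q_n` of the on-line conversion
algorithm, over all `n ≥ 0` and all admissible inputs (sequences over
`A_β = {0,…,⌈β⌉-1}` with value in `[0, 1/(β+1))`), is finite. -/
theorem online_conversion_finitely_many_states (β : ℝ) (hβ : IsPisot β)
    (δ : ℕ) (hδpos : 0 < δ) (hδ : DelayCond β δ)
    (hδmin : ∀ δ' : ℕ, 0 < δ' → DelayCond β δ' → δ ≤ δ') :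
    {r : ℝ | ∃ x : ℕ → ℤ, (∀ j, 0 ≤ x j ∧ x j ≤ ⌈β⌉ - 1) ∧
      0 ≤ (∑' j : ℕ, (x j : ℝ) * (β⁻¹) ^ (j + 1)) ∧
      (∑' j : ℕ, (x j : ℝ) * (β⁻¹) ^ (j + 1)) < 1 / (β + 1) ∧
      ∃ n : ℕ, r = qseq β δ x n}.Finite := by
  classical
  obtain ⟨hβ1, hint, hconj⟩ := hβ
  have hb0 : (0:ℝ) < β := lt_trans zero_lt_one hβ1
  have hβδpos : (0:ℝ) < β ^ δ := pow_pos hb0 δ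
  have hQint : IsIntegral ℚ β := hint.tower_top
  haveI : FiniteDimensional ℚ (ℚ⟮β⟯ : IntermediateField ℚ ℝ) :=
    IntermediateField.adjoin.finiteDimensional hQint
  haveI : NumberField (ℚ⟮β⟯ : IntermediateField ℚ ℝ) := ⟨⟩
  set K : IntermediateField ℚ ℝ := ℚ⟮β⟯ with hK
  set b : K := IntermediateField.AdjoinSimple.gen ℚ β with hb
  have hbR : algebraMap K ℝ b = β := IntermediateField.AdjoinSimple.algebraMap_gen ℚ β
  have hinj : Function.Injective (algebraMap K ℝ) := (algebraMap (↥K) ℝ).injective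
  have hminb : minpoly ℤ b = minpoly ℤ β := by
    have h := minpoly.algebraMap_eq (A := ℤ) hinj b
    rw [hbR] at h
    exact h.symm
  have hbint : IsIntegral ℤ b := by
    rw [← isIntegral_algebraMap_iff (A := ↥K) (B := ℝ) hinj, hbR]
    exact hint
  have hroot : ∀ φ : K →+* ℂ, Polynomial.aeval (φ b) (minpoly ℤ β) = 0 := by
    intro φ
    rw [← hminb]
    have h1 : Polynomial.aeval b (minpoly ℤ b) = 0 := minpoly.aeval ℤ b
    have h2 : Polynomial.aeval (φ.toIntAlgHom b) (minpoly ℤ b) =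
        φ.toIntAlgHom (Polynomial.aeval b (minpoly ℤ b)) :=
      Polynomial.aeval_algHom_apply φ.toIntAlgHom b (minpoly ℤ b)
    rw [h1, map_zero] at h2
    exact h2
  have hPis : ∀ φ : K →+* ℂ, ¬ (‖φ b‖ < 1) → φ b = (β:ℂ) := by
    intro φ h
    by_contra hne
    exact h (hconj _ (hroot φ) hne)
  set Ym : ℝ := β * B0 β δ + Aβ β + 2 + β with hYm
  set Bf : (K →+* ℂ) → ℝ := fun φ =>
    if ‖φ b‖ < 1 then (δ:ℝ) * Aβ β + (Aβ β + Ym) / (1 - ‖φ b‖)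
    else β ^ δ * B0 β δ with hBfdef
  haveI hne : Nonempty (K →+* ℂ) := inferInstance
  set B : ℝ := Finset.univ.sup' Finset.univ_nonempty Bf with hB
  have hBf : ∀ φ, Bf φ ≤ B := fun φ => Finset.le_sup' Bf (Finset.mem_univ φ)
  have hfin := NumberField.Embeddings.finite_of_norm_le (↥K) ℂ B
  refine Set.Finite.subset (hfin.image (fun p : K => algebraMap K ℝ p / β ^ δ)) ?_
  rintro r ⟨x, hxd, hv0, hv1, n, rfl⟩
  have hv1' : tailS β x 0 < 1 / (β + 1) := by
    simpa [tailS] using hv1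
  have hqb : ∀ m, |qseq β δ x m| ≤ B0 β δ := qbound hβ1 hxd hδpos hδ hv1'
  obtain ⟨p, hpint, hpemb, hpval, hpbound⟩ := exists_rep β hβ1 hint δ x hxd (B0 β δ) hqb n
  have hB00 : 0 ≤ B0 β δ := le_trans (abs_nonneg _) (hqb 0)
  have hA1 : 1 ≤ Aβ β := A_ge_one hβ1
  have hYm0 : 0 < Ym := by rw [hYm]; nlinarith
  refine ⟨p, ⟨hpint, ?_⟩, ?_⟩
  · intro φ
    refine le_trans ?_ (hBf φ)
    by_cases ht : ‖φ b‖ < 1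
    · have h := hpbound φ ht
      rw [hBfdef]
      simp only [if_pos ht]
      have ht0 : 0 ≤ ‖φ b‖ := norm_nonneg _
      have ht1 : 0 < 1 - ‖φ b‖ := by linarith
      have hD : 0 ≤ (Aβ β + Ym) / (1 - ‖φ b‖) := by positivity
      by_cases hn : n ≤ δ
      · rw [if_pos hn] at h
        have hnd : (n:ℝ) ≤ (δ:ℝ) := by exact_mod_cast hn
        have : (n:ℝ) * Aβ β ≤ (δ:ℝ) * Aβ β := by nlinarith
        linarith
      · rw [if_neg hn] at h
        exact h
    · have hφβ := hPis φ ht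
      have h2 := hpemb φ hφβ
      have h3 : ‖φ p‖ = |algebraMap K ℝ p| := by
        rw [h2, Complex.norm_real, Real.norm_eq_abs]
      rw [hBfdef]
      simp only [if_neg ht]
      rw [h3, hpval, abs_mul, abs_of_pos hβδpos]
      exact mul_le_mul_of_nonneg_left (hqb n) hβδpos.le
  · show algebraMap (↥(ℚ⟮β⟯ : IntermediateField ℚ ℝ)) ℝ p / β ^ δ = qseq β δ x n
    rw [hpval]
    field_simp
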